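/- The length metric of the Hilbert–Finsler norm is the Hilbert metric: for every bounded open convex Ω ⊆ ℝⁿ and all x, y ∈ Ω, d_Ω(x,y) equals the infimum, over all continuously differentiable paths γ : [0,1] → Ω with γ(0) = x and γ(1) = y, of the Finsler length ∫₀¹ ‖γ'(t)‖_{γ(t)}^Ω dt. -/

import Mathlib

open Set MeasureTheory
open scoped ENNReal Classical

noncomputable section

/-- The set of parameters `t` for which `x + t • (y - x)` lies in the closure of `Ω`. -/
def chordParams {n : ℕ} (Ω : Set (EuclideanSpace ℝ (Fin n)))
    (x y : EuclideanSpace ℝ (Fin n)) : Set ℝ :=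
  {t : ℝ | x + t • (y - x) ∈ closure Ω}

/-- The Hilbert distance on a bounded open convex set `Ω`: for `x ≠ y` the line
through `x` and `y` meets `∂Ω` at `p = x + a • (y - x)` and `q = x + b • (y - x)`
where `a = sInf (chordParams Ω x y) ≤ 0` and `b = sSup (chordParams Ω x y) ≥ 1`,
so that `p, x, y, q` occur in this order on the line, and
`d_Ω(x,y) = (1/2) log (|p-y||q-x| / (|p-x||q-y|))`. -/
def hilbertDist {n : ℕ} (Ω : Set (EuclideanSpace ℝ (Fin n)))
    (x y : EuclideanSpace ℝ (Fin n)) : ℝ :=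
  if x = y then 0
  else
    let p := x + sInf (chordParams Ω x y) • (y - x)
    let q := x + sSup (chordParams Ω x y) • (y - x)
    (1 / 2) * Real.log ((dist p y * dist q x) / (dist p x * dist q y))

/-- The parameter at which the ray from `x` in direction `v` exits `Ω`:
`x + (rayParam Ω x v) • v` is the point where this ray meets `∂Ω`. -/
def rayParam {n : ℕ} (Ω : Set (EuclideanSpace ℝ (Fin n)))
    (x v : EuclideanSpace ℝ (Fin n)) : ℝ :=
  sSup {t : ℝ | 0 ≤ t ∧ x + t • v ∈ closure Ω}

/-- The Hilbert--Finsler norm `‖v‖ₓ^Ω = (1/2)(1/|x-p⁻| + 1/|x-p⁺|)|v|`, where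
`p⁺` (resp. `p⁻`) is the point where the ray from `x` in the direction `v`
(resp. `-v`) meets `∂Ω`. -/
def finslerNorm {n : ℕ} (Ω : Set (EuclideanSpace ℝ (Fin n)))
    (x v : EuclideanSpace ℝ (Fin n)) : ℝ :=
  if v = 0 then 0
  else
    let pPlus := x + rayParam Ω x v • v
    let pMinus := x + rayParam Ω x (-v) • (-v)
    (1 / 2) * (1 / dist x pMinus + 1 / dist x pPlus) * ‖v‖

section Aux

variable {n : ℕ} {Ω : Set (EuclideanSpace ℝ (Fin n))}
variable {z v : EuclideanSpace ℝ (Fin n)}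

lemma raySet_convex (hconv : Convex ℝ Ω) (z v : EuclideanSpace ℝ (Fin n)) :
    Convex ℝ {t : ℝ | 0 ≤ t ∧ z + t • v ∈ closure Ω} := by
  intro s hs t ht α β hα hβ hαβ
  refine ⟨add_nonneg (mul_nonneg hα hs.1) (mul_nonneg hβ ht.1), ?_⟩
  have h := hconv.closure hs.2 ht.2 hα hβ hαβ
  have e : α • (z + s • v) + β • (z + t • v) = z + (α • s + β • t) • v := by
    have h1 : α • z + β • z = z := by rw [← add_smul, hαβ, one_smul]
    calc α • (z + s • v) + β • (z + t • v)
        = (α • z + β • z) + ((α * s) • v + (β * t) • v) := by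
          simp only [smul_add, smul_smul]; abel
    _ = z + (α • s + β • t) • v := by rw [h1, add_smul]; simp only [smul_eq_mul]
  rwa [e] at h

lemma raySet_closed (z v : EuclideanSpace ℝ (Fin n)) :
    IsClosed {t : ℝ | 0 ≤ t ∧ z + t • v ∈ closure Ω} := by
  have : {t : ℝ | 0 ≤ t ∧ z + t • v ∈ closure Ω} =
      Ici 0 ∩ (fun t : ℝ => z + t • v) ⁻¹' closure Ω := rfl
  rw [this]
  exact isClosed_Ici.inter (isClosed_closure.preimage
    (continuous_const.add (continuous_id.smul continuous_const)))

lemma raySet_bddAbove (hbd : Bornology.IsBounded Ω) (z : EuclideanSpace ℝ (Fin n))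
    (hv : v ≠ 0) : BddAbove {t : ℝ | 0 ≤ t ∧ z + t • v ∈ closure Ω} := by
  obtain ⟨R, hR⟩ := hbd.closure.subset_closedBall 0
  have hv' : 0 < ‖v‖ := norm_pos_iff.2 hv
  refine ⟨(R + ‖z‖) / ‖v‖, fun t ht => ?_⟩
  have h1 : ‖z + t • v‖ ≤ R := by simpa using hR ht.2
  have h2 : ‖t • v‖ ≤ R + ‖z‖ := by
    have : t • v = (z + t • v) - z := by abel
    rw [this]
    calc ‖(z + t • v) - z‖ ≤ ‖z + t • v‖ + ‖z‖ := norm_sub_le _ _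
    _ ≤ R + ‖z‖ := by linarith
  rw [norm_smul, Real.norm_eq_abs, abs_of_nonneg ht.1] at h2
  rw [le_div_iff₀ hv']
  exact h2

lemma raySet_nonempty (hz : z ∈ closure Ω) :
    (0 : ℝ) ∈ {t : ℝ | 0 ≤ t ∧ z + t • v ∈ closure Ω} := by
  refine ⟨le_rfl, by simpa using hz⟩

lemma rayParam_mem (hbd : Bornology.IsBounded Ω) (hz : z ∈ closure Ω) (hv : v ≠ 0) :
    0 ≤ rayParam Ω z v ∧ z + rayParam Ω z v • v ∈ closure Ω :=
  (raySet_closed z v).csSup_mem ⟨0, raySet_nonempty hz⟩ (raySet_bddAbove hbd z hv)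

lemma rayParam_pos (hbd : Bornology.IsBounded Ω) (hop : IsOpen Ω) (hz : z ∈ Ω) (hv : v ≠ 0) :
    0 < rayParam Ω z v := by
  have hc : Continuous (fun t : ℝ => z + t • v) := continuous_const.add (continuous_id.smul continuous_const)
  have h0 : (fun t : ℝ => z + t • v) 0 ∈ Ω := by simpa using hz
  have : (fun t : ℝ => z + t • v) ⁻¹' Ω ∈ nhds (0 : ℝ) :=
    (hop.preimage hc).mem_nhds h0
  obtain ⟨δ, hδ, hball⟩ := Metric.mem_nhds_iff.1 this
  have hmem : δ / 2 ∈ {t : ℝ | 0 ≤ t ∧ z + t • v ∈ closure Ω} := by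
    refine ⟨by linarith, subset_closure (hball ?_)⟩
    rw [Metric.mem_ball, Real.dist_eq, sub_zero, abs_of_nonneg (by linarith : (0:ℝ) ≤ δ/2)]
    linarith
  have := le_csSup (raySet_bddAbove hbd z hv) hmem
  calc (0:ℝ) < δ / 2 := by linarith
  _ ≤ rayParam Ω z v := this

lemma rayParam_le (hconv : Convex ℝ Ω) (hz : z ∈ closure Ω) {t : ℝ} (ht0 : 0 ≤ t)
    (htv : z + t • v ∉ closure Ω) : rayParam Ω z v ≤ t := by
  apply csSup_le ⟨0, raySet_nonempty hz⟩
  intro s hs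
  by_contra h
  push_neg at h
  have : t ∈ {r : ℝ | 0 ≤ r ∧ z + r • v ∈ closure Ω} :=
    ((raySet_convex hconv z v).ordConnected).out (raySet_nonempty hz) hs ⟨ht0, h.le⟩
  exact htv this.2

lemma mem_of_lt_rayParam (hbd : Bornology.IsBounded Ω) (hop : IsOpen Ω) (hconv : Convex ℝ Ω)
    (hz : z ∈ Ω) (hv : v ≠ 0) {t : ℝ} (ht0 : 0 ≤ t) (htr : t < rayParam Ω z v) :
    z + t • v ∈ Ω := by
  set r := rayParam Ω z v with hr
  have hrpos : 0 < r := rayParam_pos hbd hop hz hv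
  have hw : z + r • v ∈ closure Ω := (rayParam_mem hbd (subset_closure hz) hv).2
  have hzi : z ∈ interior Ω := by rwa [hop.interior_eq]
  have key := hconv.combo_interior_closure_mem_interior hzi hw
    (a := 1 - t / r) (b := t / r) (by
      have : t / r < 1 := (div_lt_one hrpos).2 htr
      linarith) (div_nonneg ht0 hrpos.le) (by ring)
  have e : (1 - t / r) • z + (t / r) • (z + r • v) = z + t • v := by
    have hrne : r ≠ 0 := hrpos.ne'
    rw [smul_add, smul_smul, div_mul_cancel₀ _ hrne, sub_smul, one_smul]
    abel
  rw [e] at key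
  rwa [hop.interior_eq] at key

end Aux

section Chord

variable {n : ℕ} {Ω : Set (EuclideanSpace ℝ (Fin n))}
variable {x y : EuclideanSpace ℝ (Fin n)}

lemma chord_convex (hconv : Convex ℝ Ω) : Convex ℝ (chordParams Ω x y) := by
  intro s hs t ht α β hα hβ hαβ
  have h := hconv.closure hs ht hα hβ hαβ
  have e : α • (x + s • (y - x)) + β • (x + t • (y - x))
      = x + (α • s + β • t) • (y - x) := by
    have h1 : α • x + β • x = x := by rw [← add_smul, hαβ, one_smul]
    calc α • (x + s • (y - x)) + β • (x + t • (y - x))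
        = (α • x + β • x) + ((α * s) • (y - x) + (β * t) • (y - x)) := by
          simp only [smul_add, smul_smul]; abel
    _ = x + (α • s + β • t) • (y - x) := by rw [h1, add_smul]; simp only [smul_eq_mul]
  show x + (α • s + β • t) • (y - x) ∈ closure Ω
  rwa [e] at h

lemma chord_closed : IsClosed (chordParams Ω x y) :=
  isClosed_closure.preimage (continuous_const.add (continuous_id.smul continuous_const))

lemma chord_abs_le (hbd : Bornology.IsBounded Ω) (hxy : x ≠ y) :
    ∃ M : ℝ, ∀ t ∈ chordParams Ω x y, |t| ≤ M := by
  obtain ⟨R, hR⟩ := hbd.closure.subset_closedBall 0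
  have hv : (0:ℝ) < ‖y - x‖ := by
    rw [norm_pos_iff, sub_ne_zero]; exact fun h => hxy h.symm
  refine ⟨(R + ‖x‖) / ‖y - x‖, fun t ht => ?_⟩
  have h1 : ‖x + t • (y - x)‖ ≤ R := by simpa using hR ht
  have h2 : ‖t • (y - x)‖ ≤ R + ‖x‖ := by
    have e : t • (y - x) = (x + t • (y - x)) - x := by abel
    rw [e]
    calc ‖(x + t • (y - x)) - x‖ ≤ ‖x + t • (y - x)‖ + ‖x‖ := norm_sub_le _ _
    _ ≤ R + ‖x‖ := by linarith
  rw [norm_smul, Real.norm_eq_abs] at h2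
  rw [le_div_iff₀ hv]
  exact h2

lemma chord_bddAbove (hbd : Bornology.IsBounded Ω) (hxy : x ≠ y) :
    BddAbove (chordParams Ω x y) := by
  obtain ⟨M, hM⟩ := chord_abs_le hbd hxy
  exact ⟨M, fun t ht => (abs_le.1 (hM t ht)).2⟩

lemma chord_bddBelow (hbd : Bornology.IsBounded Ω) (hxy : x ≠ y) :
    BddBelow (chordParams Ω x y) := by
  obtain ⟨M, hM⟩ := chord_abs_le hbd hxy
  exact ⟨-M, fun t ht => (abs_le.1 (hM t ht)).1⟩

lemma chord_zero_mem (hx : x ∈ Ω) : (0:ℝ) ∈ chordParams Ω x y := by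
  show x + (0:ℝ) • (y - x) ∈ closure Ω
  simpa using subset_closure hx

lemma chord_one_mem (hy : y ∈ Ω) : (1:ℝ) ∈ chordParams Ω x y := by
  show x + (1:ℝ) • (y - x) ∈ closure Ω
  rw [one_smul, add_comm, sub_add_cancel]
  exact subset_closure hy

lemma chord_mem_of_mem_Omega {t : ℝ} (hop : IsOpen Ω) (hbd : Bornology.IsBounded Ω)
    (hxy : x ≠ y) (ht : x + t • (y - x) ∈ Ω) :
    ∃ δ > 0, ∀ s : ℝ, |s - t| < δ → s ∈ chordParams Ω x y := by
  have hc : Continuous (fun s : ℝ => x + s • (y - x)) :=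
    continuous_const.add (continuous_id.smul continuous_const)
  have : (fun s : ℝ => x + s • (y - x)) ⁻¹' Ω ∈ nhds t := (hop.preimage hc).mem_nhds ht
  obtain ⟨δ, hδ, hball⟩ := Metric.mem_nhds_iff.1 this
  refine ⟨δ, hδ, fun s hs => ?_⟩
  exact subset_closure (hball (by rwa [Metric.mem_ball, Real.dist_eq]))

lemma sInf_chord_neg (hbd : Bornology.IsBounded Ω) (hop : IsOpen Ω)
    (hx : x ∈ Ω) (hxy : x ≠ y) : sInf (chordParams Ω x y) < 0 := by
  have h0 : x + (0:ℝ) • (y - x) ∈ Ω := by simpa using hx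
  obtain ⟨δ, hδ, hmem⟩ := chord_mem_of_mem_Omega hop hbd hxy h0
  have : (-(δ/2)) ∈ chordParams Ω x y := by
    apply hmem
    rw [sub_zero, abs_of_nonpos (by linarith)]
    linarith
  calc sInf (chordParams Ω x y) ≤ -(δ/2) := csInf_le (chord_bddBelow hbd hxy) this
  _ < 0 := by linarith

lemma one_lt_sSup_chord (hbd : Bornology.IsBounded Ω) (hop : IsOpen Ω)
    (hy : y ∈ Ω) (hxy : x ≠ y) : 1 < sSup (chordParams Ω x y) := by
  have h1 : x + (1:ℝ) • (y - x) ∈ Ω := by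
    rw [one_smul, add_comm, sub_add_cancel]; exact hy
  obtain ⟨δ, hδ, hmem⟩ := chord_mem_of_mem_Omega hop hbd hxy h1
  have : (1 + δ/2) ∈ chordParams Ω x y := by
    apply hmem
    rw [add_sub_cancel_left, abs_of_nonneg (by linarith)]
    linarith
  calc (1:ℝ) < 1 + δ/2 := by linarith
  _ ≤ sSup (chordParams Ω x y) := le_csSup (chord_bddAbove hbd hxy) this

lemma sSup_chord_mem (hbd : Bornology.IsBounded Ω) (hx : x ∈ Ω) (hxy : x ≠ y) :
    sSup (chordParams Ω x y) ∈ chordParams Ω x y :=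
  chord_closed.csSup_mem ⟨0, chord_zero_mem hx⟩ (chord_bddAbove hbd hxy)

lemma sInf_chord_mem (hbd : Bornology.IsBounded Ω) (hx : x ∈ Ω) (hxy : x ≠ y) :
    sInf (chordParams Ω x y) ∈ chordParams Ω x y :=
  chord_closed.csInf_mem ⟨0, chord_zero_mem hx⟩ (chord_bddBelow hbd hxy)

lemma chord_eq_Icc (hbd : Bornology.IsBounded Ω) (hconv : Convex ℝ Ω)
    (hx : x ∈ Ω) (hxy : x ≠ y) :
    chordParams Ω x y = Icc (sInf (chordParams Ω x y)) (sSup (chordParams Ω x y)) := by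
  apply Subset.antisymm
  · intro t ht
    exact ⟨csInf_le (chord_bddBelow hbd hxy) ht, le_csSup (chord_bddAbove hbd hxy) ht⟩
  · intro t ht
    rcases eq_or_lt_of_le ht.1 with h | h
    · rw [← h]; exact sInf_chord_mem hbd hx hxy
    rcases eq_or_lt_of_le ht.2 with h' | h'
    · rw [h']; exact sSup_chord_mem hbd hx hxy
    obtain ⟨u, hu, hu'⟩ := exists_lt_of_csInf_lt ⟨0, chord_zero_mem hx⟩ h
    obtain ⟨w, hw, hw'⟩ := exists_lt_of_lt_csSup ⟨0, chord_zero_mem hx⟩ h'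
    exact ((chord_convex hconv).ordConnected).out hu hw ⟨hu'.le, hw'.le⟩

lemma sSup_chord_not_mem_Omega (hbd : Bornology.IsBounded Ω) (hop : IsOpen Ω)
    (hx : x ∈ Ω) (hxy : x ≠ y) :
    x + sSup (chordParams Ω x y) • (y - x) ∉ Ω := by
  intro hq
  obtain ⟨δ, hδ, hmem⟩ := chord_mem_of_mem_Omega hop hbd hxy hq
  have : sSup (chordParams Ω x y) + δ/2 ∈ chordParams Ω x y := by
    apply hmem
    rw [add_sub_cancel_left, abs_of_nonneg (by linarith)]
    linarith
  have := le_csSup (chord_bddAbove hbd hxy) this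
  linarith

lemma sInf_chord_not_mem_Omega (hbd : Bornology.IsBounded Ω) (hop : IsOpen Ω)
    (hx : x ∈ Ω) (hxy : x ≠ y) :
    x + sInf (chordParams Ω x y) • (y - x) ∉ Ω := by
  intro hp
  obtain ⟨δ, hδ, hmem⟩ := chord_mem_of_mem_Omega hop hbd hxy hp
  have : sInf (chordParams Ω x y) - δ/2 ∈ chordParams Ω x y := by
    apply hmem
    rw [sub_sub_cancel_left, abs_of_nonpos (by linarith)]
    linarith
  have := csInf_le (chord_bddBelow hbd hxy) this
  linarith

end Chord

section Finsler

variable {n : ℕ} {Ω : Set (EuclideanSpace ℝ (Fin n))}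
variable {z v : EuclideanSpace ℝ (Fin n)}

lemma finsler_nonneg (Ω : Set (EuclideanSpace ℝ (Fin n))) (z v : EuclideanSpace ℝ (Fin n)) :
    0 ≤ finslerNorm Ω z v := by
  rw [finslerNorm]
  split
  · exact le_rfl
  · dsimp only
    have h1 : (0:ℝ) ≤ 1 / dist z (z + rayParam Ω z (-v) • (-v)) :=
      one_div_nonneg.2 dist_nonneg
    have h2 : (0:ℝ) ≤ 1 / dist z (z + rayParam Ω z v • v) :=
      one_div_nonneg.2 dist_nonneg
    positivity

lemma finslerNorm_eq (hbd : Bornology.IsBounded Ω) (hop : IsOpen Ω)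
    (hz : z ∈ Ω) (hv : v ≠ 0) :
    finslerNorm Ω z v = (1/2) * (1 / rayParam Ω z (-v) + 1 / rayParam Ω z v) := by
  have hv' : -v ≠ 0 := neg_ne_zero.2 hv
  have hvn : (0:ℝ) < ‖v‖ := norm_pos_iff.2 hv
  have r1 : 0 < rayParam Ω z v := rayParam_pos hbd hop hz hv
  have r2 : 0 < rayParam Ω z (-v) := rayParam_pos hbd hop hz hv'
  rw [finslerNorm, if_neg hv]
  show (1/2) * (1 / dist z (z + rayParam Ω z (-v) • (-v)) + 1 / dist z (z + rayParam Ω z v • v)) * ‖v‖ = _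
  have d1 : dist z (z + rayParam Ω z v • v) = rayParam Ω z v * ‖v‖ := by
    rw [dist_self_add_right, norm_smul, Real.norm_eq_abs, abs_of_nonneg r1.le]
  have d2 : dist z (z + rayParam Ω z (-v) • (-v)) = rayParam Ω z (-v) * ‖v‖ := by
    rw [dist_self_add_right, norm_smul, Real.norm_eq_abs, abs_of_nonneg r2.le, norm_neg]
  rw [d1, d2]
  field_simp

lemma funk_bound (hbd : Bornology.IsBounded Ω)
    (hz : z ∈ Ω) (f : EuclideanSpace ℝ (Fin n) →L[ℝ] ℝ) (c : ℝ)
    (hfc : ∀ w ∈ closure Ω, f w ≤ c) :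
    f v * rayParam Ω z v ≤ c - f z := by
  by_cases hv : v = 0
  · rw [hv, map_zero, zero_mul, sub_nonneg]
    exact hfc z (subset_closure hz)
  · have hm := (rayParam_mem hbd (subset_closure hz) hv).2
    have := hfc _ hm
    rw [map_add, f.map_smul, smul_eq_mul] at this
    linarith

lemma finsler_le_of_ball {ρ : ℝ} (hρ : 0 < ρ) (hball : Metric.closedBall z ρ ⊆ Ω)
    (hbd : Bornology.IsBounded Ω) (hop : IsOpen Ω) (v : EuclideanSpace ℝ (Fin n)) :
    finslerNorm Ω z v ≤ ‖v‖ / ρ := by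
  by_cases hv : v = 0
  · rw [hv, finslerNorm, if_pos rfl]
    simp
  · have hz : z ∈ Ω := hball (Metric.mem_closedBall_self hρ.le)
    have hvn : (0:ℝ) < ‖v‖ := norm_pos_iff.2 hv
    have key : ∀ w : EuclideanSpace ℝ (Fin n), w ≠ 0 → ‖w‖ = ‖v‖ →
        1 / rayParam Ω z w ≤ ‖v‖ / ρ := by
      intro w hw hwv
      have hmem : ρ / ‖v‖ ∈ {t : ℝ | 0 ≤ t ∧ z + t • w ∈ closure Ω} := by
        refine ⟨le_of_lt (by positivity), subset_closure (hball ?_)⟩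
        rw [Metric.mem_closedBall, dist_self_add_left, norm_smul, Real.norm_eq_abs,
          abs_of_nonneg (le_of_lt (by positivity)), hwv, div_mul_cancel₀ _ hvn.ne']
      have hr : ρ / ‖v‖ ≤ rayParam Ω z w := le_csSup (raySet_bddAbove hbd z hw) hmem
      have h0 : (0:ℝ) < ρ / ‖v‖ := by positivity
      calc 1 / rayParam Ω z w ≤ 1 / (ρ / ‖v‖) := by
            apply one_div_le_one_div_of_le h0 hr
      _ = ‖v‖ / ρ := by rw [one_div_div]
    have k1 := key v hv rfl
    have k2 := key (-v) (neg_ne_zero.2 hv) (norm_neg v)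
    rw [finslerNorm_eq hbd hop hz hv]
    linarith

end Finsler

section Continuity

variable {n : ℕ} {Ω : Set (EuclideanSpace ℝ (Fin n))}
variable {z v : EuclideanSpace ℝ (Fin n)}

lemma rayParam_continuousAt (hbd : Bornology.IsBounded Ω) (hop : IsOpen Ω)
    (hconv : Convex ℝ Ω) (hz : z ∈ Ω) (hv : v ≠ 0) :
    ContinuousAt (fun p : EuclideanSpace ℝ (Fin n) × EuclideanSpace ℝ (Fin n) =>
      rayParam Ω p.1 p.2) (z, v) := by
  have hopenΩ : ∀ᶠ p : EuclideanSpace ℝ (Fin n) × EuclideanSpace ℝ (Fin n) in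
      nhds (z, v), p.1 ∈ Ω := by
    have : IsOpen {p : EuclideanSpace ℝ (Fin n) × EuclideanSpace ℝ (Fin n) | p.1 ∈ Ω} :=
      hop.preimage continuous_fst
    exact this.mem_nhds hz
  have hopenv : ∀ᶠ p : EuclideanSpace ℝ (Fin n) × EuclideanSpace ℝ (Fin n) in
      nhds (z, v), p.2 ≠ 0 := by
    have : IsOpen {p : EuclideanSpace ℝ (Fin n) × EuclideanSpace ℝ (Fin n) | p.2 ≠ 0} :=
      isOpen_compl_singleton.preimage continuous_snd
    exact this.mem_nhds hv
  rw [ContinuousAt]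
  apply tendsto_order.2
  constructor
  · intro t ht
    rcases lt_or_ge t 0 with ht0 | ht0
    · filter_upwards [hopenΩ, hopenv] with p hp1 hp2
      calc t < 0 := ht0
      _ ≤ rayParam Ω p.1 p.2 := (rayParam_mem hbd (subset_closure hp1) hp2).1
    · set t' := (t + rayParam Ω z v) / 2 with ht'
      have h1 : t < t' := by
        rw [ht']; linarith
      have h2 : t' < rayParam Ω z v := by
        rw [ht']; linarith
      have ht'0 : 0 ≤ t' := le_trans ht0 h1.le
      have hmem : z + t' • v ∈ Ω := mem_of_lt_rayParam hbd hop hconv hz hv ht'0 h2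
      have hco : Continuous (fun p : EuclideanSpace ℝ (Fin n) × EuclideanSpace ℝ (Fin n) =>
          p.1 + t' • p.2) := continuous_fst.add (continuous_snd.const_smul t')
      have hev : ∀ᶠ p : EuclideanSpace ℝ (Fin n) × EuclideanSpace ℝ (Fin n) in
          nhds (z, v), p.1 + t' • p.2 ∈ Ω := (hop.preimage hco).mem_nhds hmem
      filter_upwards [hev, hopenΩ, hopenv] with p hp hp1 hp2
      have : t' ∈ {s : ℝ | 0 ≤ s ∧ p.1 + s • p.2 ∈ closure Ω} := ⟨ht'0, subset_closure hp⟩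
      calc t < t' := h1
      _ ≤ rayParam Ω p.1 p.2 := le_csSup (raySet_bddAbove hbd p.1 hp2) this
  · intro t ht
    set t' := (t + rayParam Ω z v) / 2 with ht'
    have h1 : t' < t := by rw [ht']; linarith
    have h2 : rayParam Ω z v < t' := by rw [ht']; linarith
    have ht'0 : 0 ≤ t' :=
      le_trans (rayParam_mem hbd (subset_closure hz) hv).1 h2.le
    have hnmem : z + t' • v ∉ closure Ω := by
      intro hmem
      have : t' ≤ rayParam Ω z v :=
        le_csSup (raySet_bddAbove hbd z hv) ⟨ht'0, hmem⟩
      linarith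
    have hco : Continuous (fun p : EuclideanSpace ℝ (Fin n) × EuclideanSpace ℝ (Fin n) =>
        p.1 + t' • p.2) := continuous_fst.add (continuous_snd.const_smul t')
    have hev : ∀ᶠ p : EuclideanSpace ℝ (Fin n) × EuclideanSpace ℝ (Fin n) in
        nhds (z, v), p.1 + t' • p.2 ∈ (closure Ω)ᶜ :=
      (isClosed_closure.isOpen_compl.preimage hco).mem_nhds hnmem
    filter_upwards [hev, hopenΩ] with p hp hp1
    calc rayParam Ω p.1 p.2 ≤ t' := rayParam_le hconv (subset_closure hp1) ht'0 hp
    _ < t := h1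

lemma finsler_continuousAt (hbd : Bornology.IsBounded Ω) (hop : IsOpen Ω)
    (hconv : Convex ℝ Ω) (hz : z ∈ Ω) (v : EuclideanSpace ℝ (Fin n)) :
    ContinuousAt (fun p : EuclideanSpace ℝ (Fin n) × EuclideanSpace ℝ (Fin n) =>
      finslerNorm Ω p.1 p.2) (z, v) := by
  by_cases hv : v = 0
  · subst hv
    rw [ContinuousAt]
    have h0 : finslerNorm Ω z 0 = 0 := by rw [finslerNorm, if_pos rfl]
    rw [h0]
    obtain ⟨ε, hε, hball⟩ := Metric.isOpen_iff.1 hop z hz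
    set ρ := ε / 3 with hρdef
    have hρ : 0 < ρ := by rw [hρdef]; linarith
    have hbound : ∀ᶠ p : EuclideanSpace ℝ (Fin n) × EuclideanSpace ℝ (Fin n) in
        nhds (z, 0), finslerNorm Ω p.1 p.2 ≤ ‖p.2‖ / ρ := by
      have hev : ∀ᶠ p : EuclideanSpace ℝ (Fin n) × EuclideanSpace ℝ (Fin n) in
          nhds (z, 0), p.1 ∈ Metric.ball z ρ :=
        ((Metric.isOpen_ball).preimage continuous_fst).mem_nhds
          (Metric.mem_ball_self hρ)
      filter_upwards [hev] with p hp
      apply finsler_le_of_ball hρ _ hbd hop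
      intro w hw
      apply hball
      rw [Metric.mem_ball]
      calc dist w z ≤ dist w p.1 + dist p.1 z := dist_triangle _ _ _
      _ ≤ ρ + ρ := add_le_add (Metric.mem_closedBall.1 hw) (Metric.mem_ball.1 hp).le
      _ < ε := by rw [hρdef]; linarith
    have hg : Filter.Tendsto (fun p : EuclideanSpace ℝ (Fin n) × EuclideanSpace ℝ (Fin n) =>
        ‖p.2‖ / ρ) (nhds (z, 0)) (nhds 0) := by
      have : Continuous (fun p : EuclideanSpace ℝ (Fin n) × EuclideanSpace ℝ (Fin n) =>
          ‖p.2‖ / ρ) := continuous_snd.norm.div_const ρ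
      have := this.tendsto (z, 0)
      simpa using this
    exact squeeze_zero' (Filter.Eventually.of_forall (fun p => finsler_nonneg Ω p.1 p.2))
      hbound hg
  · have hΨ : ContinuousAt (fun p : EuclideanSpace ℝ (Fin n) × EuclideanSpace ℝ (Fin n) =>
        (1/2) * (1 / rayParam Ω p.1 (-p.2) + 1 / rayParam Ω p.1 p.2)) (z, v) := by
      have hc1 : ContinuousAt (fun p : EuclideanSpace ℝ (Fin n) × EuclideanSpace ℝ (Fin n) =>
          rayParam Ω p.1 (-p.2)) (z, v) := by
        have hmap : Continuous (fun p : EuclideanSpace ℝ (Fin n) × EuclideanSpace ℝ (Fin n) =>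
            (p.1, -p.2)) := continuous_fst.prodMk continuous_snd.neg
        have hbase : ContinuousAt (fun p : EuclideanSpace ℝ (Fin n) × EuclideanSpace ℝ (Fin n) =>
            rayParam Ω p.1 p.2) (z, -v) :=
          rayParam_continuousAt hbd hop hconv hz (neg_ne_zero.2 hv)
        have := ContinuousAt.comp (f := fun p : EuclideanSpace ℝ (Fin n) × EuclideanSpace ℝ (Fin n) => (p.1, -p.2))
          (x := ((z, v) : EuclideanSpace ℝ (Fin n) × EuclideanSpace ℝ (Fin n))) hbase hmap.continuousAt
        exact this
      have hc2 := rayParam_continuousAt hbd hop hconv hz hv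
      have hr1 : rayParam Ω z (-v) ≠ 0 := (rayParam_pos hbd hop hz (neg_ne_zero.2 hv)).ne'
      have hr2 : rayParam Ω z v ≠ 0 := (rayParam_pos hbd hop hz hv).ne'
      exact continuousAt_const.mul
        (((continuousAt_const.div hc1 hr1)).add (continuousAt_const.div hc2 hr2))
    apply hΨ.congr
    have hopen : IsOpen {p : EuclideanSpace ℝ (Fin n) × EuclideanSpace ℝ (Fin n) |
        p.1 ∈ Ω ∧ p.2 ≠ 0} :=
      (hop.preimage continuous_fst).inter (isOpen_compl_singleton.preimage continuous_snd)
    have hmem : (z, v) ∈ {p : EuclideanSpace ℝ (Fin n) × EuclideanSpace ℝ (Fin n) |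
        p.1 ∈ Ω ∧ p.2 ≠ 0} := ⟨hz, hv⟩
    filter_upwards [hopen.mem_nhds hmem] with p hp
    exact (finslerNorm_eq hbd hop hp.1 hp.2).symm

end Continuity

section Line

variable {n : ℕ} {Ω : Set (EuclideanSpace ℝ (Fin n))}
variable {x y : EuclideanSpace ℝ (Fin n)}

lemma sub_ne_zero_of_ne' (hxy : x ≠ y) : y - x ≠ 0 :=
  sub_ne_zero.2 (fun h => hxy h.symm)

lemma line_mem_Omega (hconv : Convex ℝ Ω) (hx : x ∈ Ω) (hy : y ∈ Ω) {t : ℝ}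
    (ht : t ∈ Icc (0:ℝ) 1) : x + t • (y - x) ∈ Ω := by
  have h := hconv hx hy (by linarith [ht.2] : (0:ℝ) ≤ 1 - t) ht.1 (by ring)
  have e : (1 - t) • x + t • y = x + t • (y - x) := by
    rw [sub_smul, one_smul, smul_sub]
    abel
  rwa [e] at h

lemma line_point_eq (w : EuclideanSpace ℝ (Fin n)) (t s : ℝ) :
    (x + t • w) + s • w = x + (t + s) • w := by
  rw [add_smul]; abel

lemma line_point_eq_neg (w : EuclideanSpace ℝ (Fin n)) (t s : ℝ) :
    (x + t • w) + s • (-w) = x + (t - s) • w := by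
  rw [sub_smul, smul_neg]; abel

lemma rayParam_line_pos (hbd : Bornology.IsBounded Ω) (hop : IsOpen Ω) (hconv : Convex ℝ Ω)
    (hx : x ∈ Ω) (hy : y ∈ Ω) (hxy : x ≠ y) {t : ℝ} (ht : t ∈ Icc (0:ℝ) 1) :
    rayParam Ω (x + t • (y - x)) (y - x) = sSup (chordParams Ω x y) - t := by
  have hb : 1 < sSup (chordParams Ω x y) := one_lt_sSup_chord hbd hop hy hxy
  have ha : sInf (chordParams Ω x y) < 0 := sInf_chord_neg hbd hop hx hxy
  have hset : {s : ℝ | 0 ≤ s ∧ (x + t • (y - x)) + s • (y - x) ∈ closure Ω}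
      = Icc 0 (sSup (chordParams Ω x y) - t) := by
    ext s
    simp only [mem_setOf_eq, mem_Icc, line_point_eq]
    constructor
    · rintro ⟨hs0, hsm⟩
      have : t + s ∈ chordParams Ω x y := hsm
      have := le_csSup (chord_bddAbove hbd hxy) this
      exact ⟨hs0, by linarith⟩
    · rintro ⟨hs0, hsb⟩
      refine ⟨hs0, ?_⟩
      have : t + s ∈ chordParams Ω x y := by
        rw [chord_eq_Icc hbd hconv hx hxy]
        exact ⟨by linarith [ht.1], by linarith⟩
      exact this
  rw [rayParam, hset, csSup_Icc (by linarith [ht.2])]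

lemma rayParam_line_neg (hbd : Bornology.IsBounded Ω) (hop : IsOpen Ω) (hconv : Convex ℝ Ω)
    (hx : x ∈ Ω) (hy : y ∈ Ω) (hxy : x ≠ y) {t : ℝ} (ht : t ∈ Icc (0:ℝ) 1) :
    rayParam Ω (x + t • (y - x)) (-(y - x)) = t - sInf (chordParams Ω x y) := by
  have hb : 1 < sSup (chordParams Ω x y) := one_lt_sSup_chord hbd hop hy hxy
  have ha : sInf (chordParams Ω x y) < 0 := sInf_chord_neg hbd hop hx hxy
  have hset : {s : ℝ | 0 ≤ s ∧ (x + t • (y - x)) + s • (-(y - x)) ∈ closure Ω}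
      = Icc 0 (t - sInf (chordParams Ω x y)) := by
    ext s
    simp only [mem_setOf_eq, mem_Icc, line_point_eq_neg]
    constructor
    · rintro ⟨hs0, hsm⟩
      have : t - s ∈ chordParams Ω x y := hsm
      have := csInf_le (chord_bddBelow hbd hxy) this
      exact ⟨hs0, by linarith⟩
    · rintro ⟨hs0, hsb⟩
      refine ⟨hs0, ?_⟩
      have : t - s ∈ chordParams Ω x y := by
        rw [chord_eq_Icc hbd hconv hx hxy]
        exact ⟨by linarith, by linarith [ht.2]⟩
      exact this
  rw [rayParam, hset, csSup_Icc (by linarith [ht.1])]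

lemma line_finsler (hbd : Bornology.IsBounded Ω) (hop : IsOpen Ω) (hconv : Convex ℝ Ω)
    (hx : x ∈ Ω) (hy : y ∈ Ω) (hxy : x ≠ y) {t : ℝ} (ht : t ∈ Icc (0:ℝ) 1) :
    finslerNorm Ω (x + t • (y - x)) (y - x) =
      (1/2) * (1/(t - sInf (chordParams Ω x y)) + 1/(sSup (chordParams Ω x y) - t)) := by
  rw [finslerNorm_eq hbd hop (line_mem_Omega hconv hx hy ht) (sub_ne_zero_of_ne' hxy),
    rayParam_line_neg hbd hop hconv hx hy hxy ht, rayParam_line_pos hbd hop hconv hx hy hxy ht]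

lemma hilbertDist_formula (hbd : Bornology.IsBounded Ω) (hop : IsOpen Ω)
    (hx : x ∈ Ω) (hy : y ∈ Ω) (hxy : x ≠ y) :
    hilbertDist Ω x y = (1/2) * Real.log
      (((1 - sInf (chordParams Ω x y)) * sSup (chordParams Ω x y)) /
        ((-sInf (chordParams Ω x y)) * (sSup (chordParams Ω x y) - 1))) := by
  set a := sInf (chordParams Ω x y) with hadef
  set b := sSup (chordParams Ω x y) with hbdef
  have hb : 1 < b := one_lt_sSup_chord hbd hop hy hxy
  have ha : a < 0 := sInf_chord_neg hbd hop hx hxy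
  have hw : (0:ℝ) < ‖y - x‖ := norm_pos_iff.2 (sub_ne_zero_of_ne' hxy)
  rw [hilbertDist, if_neg hxy]
  show (1/2 : ℝ) * Real.log
      ((dist (x + a • (y - x)) y * dist (x + b • (y - x)) x) /
        (dist (x + a • (y - x)) x * dist (x + b • (y - x)) y)) = _
  have dpy : dist (x + a • (y - x)) y = (1 - a) * ‖y - x‖ := by
    rw [dist_eq_norm]
    have e : x + a • (y - x) - y = (a - 1) • (y - x) := by
      rw [sub_smul, one_smul]; abel
    rw [e, norm_smul, Real.norm_eq_abs, abs_of_neg (by linarith : a - 1 < 0), neg_sub]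
  have dqx : dist (x + b • (y - x)) x = b * ‖y - x‖ := by
    rw [dist_self_add_left, norm_smul, Real.norm_eq_abs, abs_of_pos (by linarith : (0:ℝ) < b)]
  have dpx : dist (x + a • (y - x)) x = (-a) * ‖y - x‖ := by
    rw [dist_self_add_left, norm_smul, Real.norm_eq_abs, abs_of_neg ha]
  have dqy : dist (x + b • (y - x)) y = (b - 1) * ‖y - x‖ := by
    rw [dist_eq_norm]
    have e : x + b • (y - x) - y = (b - 1) • (y - x) := by
      rw [sub_smul, one_smul]; abel
    rw [e, norm_smul, Real.norm_eq_abs, abs_of_pos (by linarith : (0:ℝ) < b - 1)]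
  rw [dpy, dqx, dpx, dqy]
  have hD1 : (0:ℝ) < -a * ‖y - x‖ * ((b - 1) * ‖y - x‖) :=
    mul_pos (mul_pos (by linarith : (0:ℝ) < -a) hw)
      (mul_pos (by linarith : (0:ℝ) < b - 1) hw)
  have hD2 : (0:ℝ) < -a * (b - 1) :=
    mul_pos (by linarith : (0:ℝ) < -a) (by linarith : (0:ℝ) < b - 1)
  congr 2
  rw [div_eq_div_iff hD1.ne' hD2.ne']
  ring

lemma line_integral_value (hbd : Bornology.IsBounded Ω) (hop : IsOpen Ω) (hconv : Convex ℝ Ω)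
    (hx : x ∈ Ω) (hy : y ∈ Ω) (hxy : x ≠ y) :
    (∫ t in (0:ℝ)..1, (1/2) * (1/(t - sInf (chordParams Ω x y))
        + 1/(sSup (chordParams Ω x y) - t)))
      = hilbertDist Ω x y := by
  set a := sInf (chordParams Ω x y) with hadef
  set b := sSup (chordParams Ω x y) with hbdef
  have hb : 1 < b := one_lt_sSup_chord hbd hop hy hxy
  have ha : a < 0 := sInf_chord_neg hbd hop hx hxy
  have hderiv : ∀ t ∈ uIcc (0:ℝ) 1, HasDerivAt
      (fun t => (1/2) * (Real.log (t - a) - Real.log (b - t)))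
      ((1/2) * (1/(t - a) + 1/(b - t))) t := by
    intro t ht
    rw [uIcc_of_le (by norm_num : (0:ℝ) ≤ 1)] at ht
    have h1 : (0:ℝ) < t - a := by linarith [ht.1]
    have h2 : (0:ℝ) < b - t := by linarith [ht.2]
    have hl1 : HasDerivAt (fun t : ℝ => Real.log (t - a)) (1/(t - a)) t := by
      have := ((hasDerivAt_id t).sub_const a).log h1.ne'
      simpa using this
    have hl2 : HasDerivAt (fun t : ℝ => Real.log (b - t)) (-1/(b - t)) t := by
      have := ((hasDerivAt_id t).const_sub b).log h2.ne'
      simpa using this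
    have := (hl1.sub hl2).const_mul (1/2 : ℝ)
    rw [show (1/2:ℝ) * (1/(t - a) + 1/(b - t)) = 1/2 * (1/(t - a) - -1/(b - t)) by ring]
    exact this
  have hint : IntervalIntegrable (fun t => (1/2) * (1/(t - a) + 1/(b - t))) volume 0 1 := by
    apply ContinuousOn.intervalIntegrable
    rw [uIcc_of_le (by norm_num : (0:ℝ) ≤ 1)]
    apply continuousOn_const.mul
    apply ContinuousOn.add
    · exact continuousOn_const.div ((continuous_id.sub continuous_const).continuousOn)
        (fun t ht => ne_of_gt (by simpa using (by linarith [ht.1] : (0:ℝ) < t - a)))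
    · exact continuousOn_const.div ((continuous_const.sub continuous_id).continuousOn)
        (fun t ht => ne_of_gt (by simpa using (by linarith [ht.2] : (0:ℝ) < b - t)))
  rw [intervalIntegral.integral_eq_sub_of_hasDerivAt hderiv hint,
    hilbertDist_formula hbd hop hx hy hxy]
  rw [zero_sub, sub_zero]
  rw [Real.log_div (mul_pos (by linarith : (0:ℝ) < 1 - a) (by linarith : (0:ℝ) < b)).ne'
      (mul_pos (by linarith : (0:ℝ) < -a) (by linarith : (0:ℝ) < b - 1)).ne',
    Real.log_mul (by linarith : (1:ℝ) - a ≠ 0) (by linarith : b ≠ 0),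
    Real.log_mul (by linarith : -a ≠ 0) (by linarith : b - 1 ≠ 0)]
  ring

end Line

section Lower

variable {n : ℕ} {Ω : Set (EuclideanSpace ℝ (Fin n))}
variable {x y : EuclideanSpace ℝ (Fin n)}

lemma key_pointwise (hbd : Bornology.IsBounded Ω) (hop : IsOpen Ω)
    {z : EuclideanSpace ℝ (Fin n)} (v : EuclideanSpace ℝ (Fin n)) (hz : z ∈ Ω)
    (f g : EuclideanSpace ℝ (Fin n) →L[ℝ] ℝ) (cf cg : ℝ)
    (hfK : ∀ w ∈ closure Ω, f w ≤ cf) (hgK : ∀ w ∈ closure Ω, g w ≤ cg)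
    (hfz : f z < cf) (hgz : g z < cg) :
    (1/2) * (f v / (cf - f z) - g v / (cg - g z)) ≤ finslerNorm Ω z v := by
  by_cases hv : v = 0
  · have : finslerNorm Ω z 0 = 0 := by rw [finslerNorm, if_pos rfl]
    rw [hv, this]
    simp
  · have r1 : 0 < rayParam Ω z v := rayParam_pos hbd hop hz hv
    have r2 : 0 < rayParam Ω z (-v) := rayParam_pos hbd hop hz (neg_ne_zero.2 hv)
    have hf1 : f v * rayParam Ω z v ≤ cf - f z := funk_bound hbd hz f cf hfK
    have hg1 : g (-v) * rayParam Ω z (-v) ≤ cg - g z := funk_bound hbd hz g cg hgK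
    rw [map_neg] at hg1
    have hfz' : 0 < cf - f z := sub_pos.2 hfz
    have hgz' : 0 < cg - g z := sub_pos.2 hgz
    have e1 : f v / (cf - f z) ≤ 1 / rayParam Ω z v := by
      rw [div_le_div_iff₀ hfz' r1]; linarith
    have e2 : -(g v / (cg - g z)) ≤ 1 / rayParam Ω z (-v) := by
      rw [← neg_div, div_le_div_iff₀ hgz' r2]; linarith
    rw [finslerNorm_eq hbd hop hz hv]
    linarith

lemma log_integral (hop : IsOpen Ω)
    {γ : ℝ → EuclideanSpace ℝ (Fin n)} (hγ : ContDiffOn ℝ 1 γ (Icc 0 1))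
    (hmem : ∀ t ∈ Icc (0:ℝ) 1, γ t ∈ Ω)
    (f : EuclideanSpace ℝ (Fin n) →L[ℝ] ℝ) (c : ℝ) (hfc : ∀ z ∈ Ω, f z < c) :
    (∫ t in (0:ℝ)..1, f (derivWithin γ (Icc 0 1) t) / (c - f (γ t)))
      = Real.log (c - f (γ 0)) - Real.log (c - f (γ 1)) := by
  have hU : UniqueDiffOn ℝ (Icc (0:ℝ) 1) := uniqueDiffOn_Icc (by norm_num)
  set γ' := derivWithin γ (Icc (0:ℝ) 1) with hγ'def
  have hγc : ContinuousOn γ (Icc 0 1) := hγ.continuousOn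
  have hγ'c : ContinuousOn γ' (Icc 0 1) := hγ.continuousOn_derivWithin hU le_rfl
  have hd : ∀ t ∈ Icc (0:ℝ) 1, HasDerivWithinAt γ (γ' t) (Icc 0 1) t :=
    fun t ht => (hγ.differentiableOn one_ne_zero t ht).hasDerivWithinAt
  have hwpos : ∀ t ∈ Icc (0:ℝ) 1, 0 < c - f (γ t) := fun t ht => sub_pos.2 (hfc _ (hmem t ht))
  have hwc : ContinuousOn (fun t => c - f (γ t)) (Icc (0:ℝ) 1) :=
    continuousOn_const.sub (f.continuous.comp_continuousOn hγc)
  have hcont : ContinuousOn (fun t => Real.log (c - f (γ t))) (Icc (0:ℝ) 1) :=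
    hwc.log (fun t ht => (hwpos t ht).ne')
  have hder : ∀ t ∈ Icc (0:ℝ) 1, HasDerivWithinAt (fun s => Real.log (c - f (γ s)))
      (-(f (γ' t)) / (c - f (γ t))) (Icc 0 1) t := by
    intro t ht
    have h1 : HasDerivWithinAt (fun s => f (γ s)) (f (γ' t)) (Icc 0 1) t :=
      (f.hasFDerivAt (x := γ t)).comp_hasDerivWithinAt t (hd t ht)
    have h2 : HasDerivWithinAt (fun s => c - f (γ s)) (-(f (γ' t))) (Icc 0 1) t :=
      h1.const_sub c
    have := h2.log (hwpos t ht).ne'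
    simpa using this
  have hintegrand : ContinuousOn (fun t => -(f (γ' t)) / (c - f (γ t))) (Icc (0:ℝ) 1) :=
    ((f.continuous.comp_continuousOn hγ'c).neg).div hwc (fun t ht => (hwpos t ht).ne')
  have hint : IntervalIntegrable (fun t => -(f (γ' t)) / (c - f (γ t))) volume 0 1 := by
    apply ContinuousOn.intervalIntegrable
    rwa [uIcc_of_le (by norm_num : (0:ℝ) ≤ 1)]
  have hFTC := intervalIntegral.integral_eq_sub_of_hasDeriv_right_of_le (by norm_num)
      hcont (fun t ht => (hder t (mem_Icc_of_Ioo ht)).mono_of_mem_nhdsWithin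
        (Icc_mem_nhdsGT_of_mem ⟨ht.1.le, ht.2⟩)) hint
  have hneg : (∫ t in (0:ℝ)..1, f (γ' t) / (c - f (γ t)))
      = -∫ t in (0:ℝ)..1, -(f (γ' t)) / (c - f (γ t)) := by
    rw [← intervalIntegral.integral_neg]
    congr 1
    funext t
    rw [neg_div, neg_neg]
  rw [hneg, hFTC]
  ring

lemma hilbertDist_le_length (hbd : Bornology.IsBounded Ω) (hop : IsOpen Ω)
    (hconv : Convex ℝ Ω) (hx : x ∈ Ω) (hy : y ∈ Ω) (hxy : x ≠ y)
    {γ : ℝ → EuclideanSpace ℝ (Fin n)} (hγ : ContDiffOn ℝ 1 γ (Icc 0 1))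
    (h0 : γ 0 = x) (h1 : γ 1 = y) (hmem : ∀ t ∈ Icc (0:ℝ) 1, γ t ∈ Ω) :
    hilbertDist Ω x y ≤
      ∫ t in (0:ℝ)..1, finslerNorm Ω (γ t) (derivWithin γ (Icc 0 1) t) := by
  have hU : UniqueDiffOn ℝ (Icc (0:ℝ) 1) := uniqueDiffOn_Icc (by norm_num)
  have ha : sInf (chordParams Ω x y) < 0 := sInf_chord_neg hbd hop hx hxy
  have hb : 1 < sSup (chordParams Ω x y) := one_lt_sSup_chord hbd hop hy hxy
  have hqK : x + sSup (chordParams Ω x y) • (y - x) ∈ closure Ω := sSup_chord_mem hbd hx hxy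
  have hpK : x + sInf (chordParams Ω x y) • (y - x) ∈ closure Ω := sInf_chord_mem hbd hx hxy
  have hqΩ : x + sSup (chordParams Ω x y) • (y - x) ∉ Ω :=
    sSup_chord_not_mem_Omega hbd hop hx hxy
  have hpΩ : x + sInf (chordParams Ω x y) • (y - x) ∉ Ω :=
    sInf_chord_not_mem_Omega hbd hop hx hxy
  obtain ⟨f, hf⟩ := geometric_hahn_banach_open_point hconv hop hqΩ
  obtain ⟨g, hg⟩ := geometric_hahn_banach_open_point hconv hop hpΩ
  set a := sInf (chordParams Ω x y) with hadef
  set b := sSup (chordParams Ω x y) with hbdef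
  set cf := f (x + b • (y - x)) with hcf
  set cg := g (x + a • (y - x)) with hcg
  have hfK : ∀ w ∈ closure Ω, f w ≤ cf := fun w hw =>
    closure_minimal (fun z hz => (hf z hz).le)
      (isClosed_le f.continuous continuous_const) hw
  have hgK : ∀ w ∈ closure Ω, g w ≤ cg := fun w hw =>
    closure_minimal (fun z hz => (hg z hz).le)
      (isClosed_le g.continuous continuous_const) hw
  set m := f (y - x) with hm
  set m' := -(g (y - x)) with hm'
  have hfx : f x < cf := hf x hx
  have hgx : g x < cg := hg x hx
  have hfw : cf - f x = b * m := by
    rw [hcf, map_add, f.map_smul, smul_eq_mul, hm]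
    ring
  have hgw : cg - g x = (-a) * m' := by
    rw [hcg, map_add, g.map_smul, smul_eq_mul, hm']
    ring
  have hmpos : 0 < m := by
    have h := sub_pos.2 hfx
    rw [hfw] at h
    by_contra hc
    push_neg at hc
    nlinarith
  have hm'pos : 0 < m' := by
    have h := sub_pos.2 hgx
    rw [hgw] at h
    by_contra hc
    push_neg at hc
    nlinarith
  have hxyy : x + (y - x) = y := by abel
  have hfy : f y = f x + m := by rw [← hxyy, map_add, hm]
  have hgy : g y = g x - m' := by rw [← hxyy, map_add, hm']; ring
  have hfyv : cf - f y = (b - 1) * m := by rw [hfy]; linear_combination hfw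
  have hgyv : cg - g y = (1 - a) * m' := by rw [hgy]; linear_combination hgw
  -- integrals
  set γ' := derivWithin γ (Icc (0:ℝ) 1) with hγ'def
  have hγc : ContinuousOn γ (Icc 0 1) := hγ.continuousOn
  have hγ'c : ContinuousOn γ' (Icc 0 1) := hγ.continuousOn_derivWithin hU le_rfl
  have hwfpos : ∀ t ∈ Icc (0:ℝ) 1, 0 < cf - f (γ t) :=
    fun t ht => sub_pos.2 (hf _ (hmem t ht))
  have hwgpos : ∀ t ∈ Icc (0:ℝ) 1, 0 < cg - g (γ t) :=
    fun t ht => sub_pos.2 (hg _ (hmem t ht))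
  have hcontA : ContinuousOn (fun t => f (γ' t) / (cf - f (γ t))) (Icc (0:ℝ) 1) :=
    (f.continuous.comp_continuousOn hγ'c).div
      (continuousOn_const.sub (f.continuous.comp_continuousOn hγc))
      (fun t ht => (hwfpos t ht).ne')
  have hcontB : ContinuousOn (fun t => g (γ' t) / (cg - g (γ t))) (Icc (0:ℝ) 1) :=
    (g.continuous.comp_continuousOn hγ'c).div
      (continuousOn_const.sub (g.continuous.comp_continuousOn hγc))
      (fun t ht => (hwgpos t ht).ne')
  have hintA : IntervalIntegrable (fun t => f (γ' t) / (cf - f (γ t))) volume 0 1 := by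
    apply ContinuousOn.intervalIntegrable
    rwa [uIcc_of_le (by norm_num : (0:ℝ) ≤ 1)]
  have hintB : IntervalIntegrable (fun t => g (γ' t) / (cg - g (γ t))) volume 0 1 := by
    apply ContinuousOn.intervalIntegrable
    rwa [uIcc_of_le (by norm_num : (0:ℝ) ≤ 1)]
  have hfin_cont : ContinuousOn (fun t => finslerNorm Ω (γ t) (γ' t)) (Icc (0:ℝ) 1) := by
    intro t ht
    have hca := finsler_continuousAt hbd hop hconv (hmem t ht) (γ' t)
    have hpair : ContinuousWithinAt
        (fun s => ((γ s, γ' s) : EuclideanSpace ℝ (Fin n) × EuclideanSpace ℝ (Fin n)))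
        (Icc 0 1) t := (hγc.continuousWithinAt ht).prodMk (hγ'c.continuousWithinAt ht)
    exact ContinuousAt.comp_continuousWithinAt
      (f := fun s => ((γ s, γ' s) : EuclideanSpace ℝ (Fin n) × EuclideanSpace ℝ (Fin n)))
      (x := t) hca hpair
  have hfin_int : IntervalIntegrable (fun t => finslerNorm Ω (γ t) (γ' t)) volume 0 1 := by
    apply ContinuousOn.intervalIntegrable
    rwa [uIcc_of_le (by norm_num : (0:ℝ) ≤ 1)]
  have IA : (∫ t in (0:ℝ)..1, f (γ' t) / (cf - f (γ t)))
      = Real.log (cf - f x) - Real.log (cf - f y) := by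
    have := log_integral hop hγ hmem f cf hf
    rw [h0, h1] at this
    exact this
  have IB : (∫ t in (0:ℝ)..1, g (γ' t) / (cg - g (γ t)))
      = Real.log (cg - g x) - Real.log (cg - g y) := by
    have := log_integral hop hγ hmem g cg hg
    rw [h0, h1] at this
    exact this
  have hcomb : (∫ t in (0:ℝ)..1,
        (1/2) * (f (γ' t) / (cf - f (γ t)) - g (γ' t) / (cg - g (γ t))))
      = (1/2) * ((Real.log (cf - f x) - Real.log (cf - f y))
          - (Real.log (cg - g x) - Real.log (cg - g y))) := by
    rw [intervalIntegral.integral_const_mul, intervalIntegral.integral_sub hintA hintB, IA, IB]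
  have hmono : (∫ t in (0:ℝ)..1,
        (1/2) * (f (γ' t) / (cf - f (γ t)) - g (γ' t) / (cg - g (γ t))))
      ≤ ∫ t in (0:ℝ)..1, finslerNorm Ω (γ t) (γ' t) := by
    apply intervalIntegral.integral_mono_on (by norm_num)
      ((hintA.sub hintB).const_mul _) hfin_int
    intro t ht
    exact key_pointwise hbd hop (γ' t) (hmem t ht) f g cf cg hfK hgK
      (hf _ (hmem t ht)) (hg _ (hmem t ht))
  have hvalue : hilbertDist Ω x y
      = (1/2) * ((Real.log (cf - f x) - Real.log (cf - f y))
          - (Real.log (cg - g x) - Real.log (cg - g y))) := by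
    rw [hilbertDist_formula hbd hop hx hy hxy, ← hadef, ← hbdef,
      hfw, hfyv, hgw, hgyv,
      Real.log_div (mul_pos (by linarith : (0:ℝ) < 1 - a) (by linarith : (0:ℝ) < b)).ne'
        (mul_pos (by linarith : (0:ℝ) < -a) (by linarith : (0:ℝ) < b - 1)).ne',
      Real.log_mul (by linarith : (1:ℝ) - a ≠ 0) (by linarith : b ≠ 0),
      Real.log_mul (by linarith : -a ≠ 0) (by linarith : b - 1 ≠ 0),
      Real.log_mul (by linarith : b ≠ 0) hmpos.ne',
      Real.log_mul (by linarith : b - 1 ≠ 0) hmpos.ne',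
      Real.log_mul (by linarith : -a ≠ 0) hm'pos.ne',
      Real.log_mul (by linarith : (1:ℝ) - a ≠ 0) hm'pos.ne']
    ring
  rw [hvalue, ← hcomb]
  exact hmono

end Lower

/-- The length metric of the Hilbert–Finsler norm is the Hilbert
metric: `d_Ω(x,y)` is the infimum of the Finsler lengths of `C¹` paths in `Ω`
joining `x` to `y`. -/
theorem hilbertDist_eq_finsler_length {n : ℕ} (hn : 1 ≤ n)
    (Ω : Set (EuclideanSpace ℝ (Fin n)))
    (hbd : Bornology.IsBounded Ω) (hop : IsOpen Ω) (hconv : Convex ℝ Ω)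
    (x y : EuclideanSpace ℝ (Fin n)) (hx : x ∈ Ω) (hy : y ∈ Ω) :
    hilbertDist Ω x y =
      sInf {L : ℝ | ∃ γ : ℝ → EuclideanSpace ℝ (Fin n),
        ContDiffOn ℝ 1 γ (Set.Icc (0 : ℝ) 1) ∧
        γ 0 = x ∧ γ 1 = y ∧
        (∀ t ∈ Set.Icc (0 : ℝ) 1, γ t ∈ Ω) ∧
        L = ∫ t in (0 : ℝ)..1, finslerNorm Ω (γ t) (derivWithin γ (Set.Icc (0 : ℝ) 1) t)} := by
  set S := {L : ℝ | ∃ γ : ℝ → EuclideanSpace ℝ (Fin n),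
        ContDiffOn ℝ 1 γ (Set.Icc (0 : ℝ) 1) ∧
        γ 0 = x ∧ γ 1 = y ∧
        (∀ t ∈ Set.Icc (0 : ℝ) 1, γ t ∈ Ω) ∧
        L = ∫ t in (0 : ℝ)..1, finslerNorm Ω (γ t) (derivWithin γ (Set.Icc (0 : ℝ) 1) t)}
    with hS
  by_cases hxy : x = y
  · subst hxy
    have h0 : hilbertDist Ω x x = 0 := by rw [hilbertDist, if_pos rfl]
    rw [h0]
    have hLnonneg : ∀ L ∈ S, (0:ℝ) ≤ L := by
      rintro L ⟨γ, hγ, hγ0, hγ1, hm, hLeq⟩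
      rw [hLeq]
      exact intervalIntegral.integral_nonneg (by norm_num)
        (fun u hu => finsler_nonneg Ω _ _)
    have hmem0 : (0:ℝ) ∈ S := by
      refine ⟨fun _ => x, contDiffOn_const, rfl, rfl, fun t ht => hx, ?_⟩
      rw [eq_comm]
      have hEq : EqOn
          (fun t => finslerNorm Ω ((fun _ => x) t)
            (derivWithin (fun _ : ℝ => x) (Icc (0:ℝ) 1) t))
          (fun _ => (0:ℝ)) (uIcc (0:ℝ) 1) := by
        intro t ht
        rw [uIcc_of_le (by norm_num : (0:ℝ) ≤ 1)] at ht
        have hd : derivWithin (fun _ : ℝ => x) (Icc (0:ℝ) 1) t = 0 :=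
          congrFun (derivWithin_const _ x) t
        show finslerNorm Ω x (derivWithin (fun _ : ℝ => x) (Icc (0:ℝ) 1) t) = 0
        rw [hd, finslerNorm, if_pos rfl]
      rw [intervalIntegral.integral_congr hEq]
      simp
    exact le_antisymm (le_csInf ⟨0, hmem0⟩ hLnonneg) (csInf_le ⟨0, hLnonneg⟩ hmem0)
  · have hlb : ∀ L ∈ S, hilbertDist Ω x y ≤ L := by
      rintro L ⟨γ, hγ, hγ0, hγ1, hm, hLeq⟩
      rw [hLeq]
      exact hilbertDist_le_length hbd hop hconv hx hy hxy hγ hγ0 hγ1 hm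
    have hmem : hilbertDist Ω x y ∈ S := by
      refine ⟨fun t => x + t • (y - x),
        (contDiff_const.add (contDiff_id.smul contDiff_const)).contDiffOn,
        by simp, ?_, fun t ht => line_mem_Omega hconv hx hy ht, ?_⟩
      · show x + (1:ℝ) • (y - x) = y
        rw [one_smul, add_comm, sub_add_cancel]
      · rw [eq_comm]
        have hEq : EqOn
            (fun t => finslerNorm Ω ((fun t => x + t • (y - x)) t)
              (derivWithin (fun t : ℝ => x + t • (y - x)) (Icc (0:ℝ) 1) t))
            (fun t => (1/2) * (1/(t - sInf (chordParams Ω x y))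
              + 1/(sSup (chordParams Ω x y) - t))) (uIcc (0:ℝ) 1) := by
          intro t ht
          rw [uIcc_of_le (by norm_num : (0:ℝ) ≤ 1)] at ht
          have hder : derivWithin (fun t : ℝ => x + t • (y - x)) (Icc (0:ℝ) 1) t = y - x := by
            have h : HasDerivAt (fun t : ℝ => x + t • (y - x)) (y - x) t := by
              have h' := (hasDerivAt_id t).smul_const (y - x)
              simpa using h'.const_add x
            exact h.hasDerivWithinAt.derivWithin (uniqueDiffOn_Icc (by norm_num) t ht)
          show finslerNorm Ω (x + t • (y - x))
              (derivWithin (fun t : ℝ => x + t • (y - x)) (Icc (0:ℝ) 1) t) = _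
          rw [hder]
          exact line_finsler hbd hop hconv hx hy hxy ht
        rw [intervalIntegral.integral_congr hEq,
          line_integral_value hbd hop hconv hx hy hxy]
    exact le_antisymm (le_csInf ⟨_, hmem⟩ hlb) (csInf_le ⟨hilbertDist Ω x y, hlb⟩ hmem)

end
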